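/- Let G be a complete multipartite graph on n vertices with at least one edge. Then v(J(G)) = n − 2. -/

import Mathlib

open MvPolynomial CategoryTheory

noncomputable section

/-- A set of vertices is a vertex cover if it meets every edge. -/
def IsVertexCover {V : Type} (G : SimpleGraph V) (C : Set V) : Prop :=
  ∀ ⦃u v : V⦄, G.Adj u v → u ∈ C ∨ v ∈ C

/-- A vertex cover minimal with respect to inclusion. -/
def IsMinimalVertexCover {V : Type} (G : SimpleGraph V) (C : Set V) : Prop :=
  IsVertexCover G C ∧ ∀ C' ⊆ C, IsVertexCover G C' → C' = C

/-- `α₀(G)`: the minimum cardinality of a vertex cover of `G`. -/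
def coverNumber {V : Type} (G : SimpleGraph V) : ℕ :=
  sInf {k | ∃ C : Set V, IsVertexCover G C ∧ C.ncard = k}

/-- `bight(I(G))`: the maximum cardinality of a minimal vertex cover of `G`. -/
def bigHeight {V : Type} (G : SimpleGraph V) : ℕ :=
  sSup {k | ∃ C : Set V, IsMinimalVertexCover G C ∧ C.ncard = k}

/-- The edge ideal `I(G) ⊆ K[x_v : v ∈ V]`, generated by the monomials
`x_u * x_v` over the edges `{u,v}` of `G`. -/
def edgeIdeal (K : Type) [Field K] {V : Type} (G : SimpleGraph V) :
    Ideal (MvPolynomial V K) :=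
  Ideal.span {m | ∃ u v : V, G.Adj u v ∧ m = X u * X v}

/-- The cover ideal `J(G) = ⋂_{{u,v} ∈ E(G)} ⟨x_u, x_v⟩`. -/
def coverIdeal (K : Type) [Field K] {V : Type} (G : SimpleGraph V) :
    Ideal (MvPolynomial V K) :=
  ⨅ (u : V) (v : V) (_ : G.Adj u v), Ideal.span {X u, X v}

/-- The v-number of a graded ideal `I`: the least `d ≥ 0` such that there is a
homogeneous polynomial `f` of degree `d` with `I : f` a prime ideal. -/
def vNumber {K : Type} [Field K] {V : Type} (I : Ideal (MvPolynomial V K)) : ℕ :=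
  sInf {d | ∃ f : MvPolynomial V K, f.IsHomogeneous d ∧
    (I.colon (Ideal.span {f})).IsPrime}

/-- The homogeneous maximal ideal `⟨x_1, …, x_n⟩` of the polynomial ring. -/
def maxIdeal (K : Type) [Field K] (V : Type) : Ideal (MvPolynomial V K) :=
  Ideal.span (Set.range (X : V → MvPolynomial V K))

/-- The depth of the module `M` with respect to the ideal `J`: the supremum of
the lengths of regular sequences on `M` consisting of elements of `J`. -/
def mdepth {R : Type} [CommRing R] (J : Ideal R) (M : Type) [AddCommGroup M]
    [Module R M] : ℕ :=
  sSup {k | ∃ rs : List R, rs.length = k ∧ (∀ r ∈ rs, r ∈ J) ∧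
    RingTheory.Sequence.IsRegular M rs}

/-- The projective dimension of an `R`-module `M`, characterized by the
vanishing of `Ext^i(M, N)` for all `i > d` and all modules `N`. -/
def projDim (R : Type) [CommRing R] (M : ModuleCat.{0} R) : ℕ :=
  sInf {d : ℕ | ∀ (N : ModuleCat.{0} R) (i : ℕ), d < i →
    Subsingleton (((Ext R (ModuleCat.{0} R) i).obj (Opposite.op M)).obj N)}

/-- A graph is complete multipartite if its vertex set admits a partition into
nonempty parts, each part inducing an empty graph, with any two vertices in
distinct parts adjacent. -/
def IsCompleteMultipartite {V : Type} (G : SimpleGraph V) : Prop :=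
  ∃ (k : ℕ) (P : Fin k → Set V),
    (∀ i, (P i).Nonempty) ∧
    (∀ v : V, ∃! i, v ∈ P i) ∧
    (∀ i, ∀ u ∈ P i, ∀ v ∈ P i, ¬ G.Adj u v) ∧
    (∀ i j, i ≠ j → ∀ u ∈ P i, ∀ v ∈ P j, G.Adj u v)

section CMAux


variable {K : Type} [Field K] {V : Type} [DecidableEq V]

/-- The substitution sending `X a` and `X b` to `0`. -/
def kill (K : Type) [Field K] {V : Type} [DecidableEq V] (a b : V) :
    MvPolynomial V K →ₐ[K] MvPolynomial V K :=
  aeval (fun w => if w = a ∨ w = b then 0 else X w)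

lemma kill_X (a b w : V) :
    kill K a b (X w) = if w = a ∨ w = b then 0 else X w := by
  simp [kill]

lemma kill_mk (a b : V) (f : MvPolynomial V K) :
    Ideal.Quotient.mk (Ideal.span {X a, X b}) (kill K a b f)
      = Ideal.Quotient.mk (Ideal.span {X a, X b}) f := by
  have h : (Ideal.Quotient.mkₐ K (Ideal.span {(X a : MvPolynomial V K), X b})).comp (kill K a b)
      = Ideal.Quotient.mkₐ K (Ideal.span {(X a : MvPolynomial V K), X b}) := by
    apply MvPolynomial.algHom_ext
    intro i
    simp only [AlgHom.comp_apply, kill_X]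
    by_cases h : i = a ∨ i = b
    · rw [if_pos h]
      have hXi : (X i : MvPolynomial V K) ∈ Ideal.span {X a, X b} := by
        rcases h with rfl | rfl
        · exact Ideal.subset_span (Set.mem_insert _ _)
        · exact Ideal.subset_span (Set.mem_insert_of_mem _ rfl)
      simp only [Ideal.Quotient.mkₐ_eq_mk, map_zero]
      exact ((Ideal.Quotient.eq_zero_iff_mem).2 hXi).symm
    · rw [if_neg h]
  exact DFunLike.congr_fun h f

lemma ker_eq_span (a b : V) :
    RingHom.ker (kill K a b) = Ideal.span {(X a : MvPolynomial V K), X b} := by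
  apply le_antisymm
  · intro f hf
    rw [RingHom.mem_ker] at hf
    have h2 := kill_mk (K := K) a b f
    rw [hf, map_zero] at h2
    exact (Ideal.Quotient.eq_zero_iff_mem).1 h2.symm
  · rw [Ideal.span_le]
    intro x hx
    simp only [Set.mem_insert_iff, Set.mem_singleton_iff] at hx
    rcases hx with rfl | rfl <;>
      simp [SetLike.mem_coe, RingHom.mem_ker, kill_X]

lemma span_pair_prime (a b : V) :
    (Ideal.span {(X a : MvPolynomial V K), X b}).IsPrime := by
  rw [← ker_eq_span (K := K) a b]
  exact RingHom.ker_isPrime _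

lemma mem_span_pair_iff {a b : V} {f : MvPolynomial V K} :
    f ∈ Ideal.span {(X a : MvPolynomial V K), X b} ↔ kill K a b f = 0 := by
  rw [← ker_eq_span (K := K) a b, RingHom.mem_ker]

lemma X_mem_span_pair_iff {a b s : V} :
    (X s : MvPolynomial V K) ∈ Ideal.span {(X a : MvPolynomial V K), X b} ↔ s = a ∨ s = b := by
  rw [mem_span_pair_iff, kill_X]
  constructor
  · intro h
    by_contra hc
    rw [if_neg hc] at h
    exact MvPolynomial.X_ne_zero s h
  · intro h
    rw [if_pos h]

lemma kill_monomial (a b : V) (m : V →₀ ℕ) (c : K) :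
    kill K a b (monomial m c) = if m a = 0 ∧ m b = 0 then monomial m c else 0 := by
  rw [kill, aeval_monomial]
  by_cases h : m a = 0 ∧ m b = 0
  · rw [if_pos h]
    have hprod : (m.prod fun i k =>
        (if i = a ∨ i = b then 0 else X i : MvPolynomial V K) ^ k)
        = m.prod fun i k => (X i : MvPolynomial V K) ^ k := by
      apply Finsupp.prod_congr
      intro i hi
      have hni : ¬(i = a ∨ i = b) := by
        rintro (rfl | rfl)
        · exact (Finsupp.mem_support_iff.1 hi) h.1
        · exact (Finsupp.mem_support_iff.1 hi) h.2
      rw [if_neg hni]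
    rw [hprod, MvPolynomial.monomial_eq, MvPolynomial.algebraMap_eq]
  · rw [if_neg h]
    rcases Decidable.not_and_iff_or_not.mp h with ha | hb
    · have hprod : (m.prod fun i k =>
          (if i = a ∨ i = b then 0 else X i : MvPolynomial V K) ^ k) = 0 := by
        rw [Finsupp.prod]
        apply Finset.prod_eq_zero (Finsupp.mem_support_iff.2 ha)
        rw [if_pos (Or.inl rfl), zero_pow ha]
      rw [hprod, mul_zero]
    · have hprod : (m.prod fun i k =>
          (if i = a ∨ i = b then 0 else X i : MvPolynomial V K) ^ k) = 0 := by
        rw [Finsupp.prod]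
        apply Finset.prod_eq_zero (Finsupp.mem_support_iff.2 hb)
        rw [if_pos (Or.inr rfl), zero_pow hb]
      rw [hprod, mul_zero]

lemma coeff_kill (a b : V) (f : MvPolynomial V K) (m : V →₀ ℕ) :
    coeff m (kill K a b f) = if m a = 0 ∧ m b = 0 then coeff m f else 0 := by
  have hrepr : kill K a b f
      = ∑ m' ∈ f.support, kill K a b (monomial m' (coeff m' f)) := by
    rw [← map_sum, f.support_sum_monomial_coeff]
  rw [hrepr, MvPolynomial.coeff_sum]
  by_cases h : m a = 0 ∧ m b = 0
  · rw [if_pos h]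
    have hterm : ∀ m' ∈ f.support,
        coeff m (kill K a b (monomial m' (coeff m' f)))
          = if m' = m then coeff m' f else 0 := by
      intro m' _
      rw [kill_monomial]
      by_cases hP : m' a = 0 ∧ m' b = 0
      · rw [if_pos hP, MvPolynomial.coeff_monomial]
      · rw [if_neg hP, MvPolynomial.coeff_zero]
        have hne : m' ≠ m := by
          rintro rfl
          exact hP h
        rw [if_neg hne]
    rw [Finset.sum_congr rfl hterm, Finset.sum_ite_eq' f.support m (fun m' => coeff m' f)]
    split_ifs with hm
    · rfl
    · exact (MvPolynomial.notMem_support_iff.1 hm).symm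
  · rw [if_neg h]
    apply Finset.sum_eq_zero
    intro m' _
    rw [kill_monomial]
    by_cases hP : m' a = 0 ∧ m' b = 0
    · rw [if_pos hP, MvPolynomial.coeff_monomial, if_neg]
      rintro rfl
      exact h hP
    · rw [if_neg hP, MvPolynomial.coeff_zero]

lemma not_mem_span_pair {a b : V} {f : MvPolynomial V K} {m : V →₀ ℕ}
    (h : coeff m f ≠ 0) (ha : m a = 0) (hb : m b = 0) :
    f ∉ Ideal.span {(X a : MvPolynomial V K), X b} := by
  rw [mem_span_pair_iff]
  intro h0
  have hc := coeff_kill (K := K) a b f m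
  rw [h0, if_pos ⟨ha, hb⟩, MvPolynomial.coeff_zero] at hc
  exact h hc.symm

lemma exists_coeff_of_not_mem_span_pair {a b : V} {f : MvPolynomial V K}
    (h : f ∉ Ideal.span {(X a : MvPolynomial V K), X b}) :
    ∃ m : V →₀ ℕ, coeff m f ≠ 0 ∧ m a = 0 ∧ m b = 0 := by
  rw [mem_span_pair_iff] at h
  obtain ⟨m, hm⟩ := MvPolynomial.ne_zero_iff.1 h
  have hc := coeff_kill (K := K) a b f m
  by_cases hP : m a = 0 ∧ m b = 0
  · rw [if_pos hP] at hc
    exact ⟨m, hc ▸ hm, hP.1, hP.2⟩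
  · rw [if_neg hP] at hc
    exact absurd hc hm

end CMAux

/-- For a complete multipartite graph `G` on `n` vertices with at least one
edge, `v(J(G)) = n - 2`. -/
theorem vNumber_coverIdeal_of_isCompleteMultipartite
    {K : Type} [Field K] {n : ℕ} (G : SimpleGraph (Fin n))
    (hG : IsCompleteMultipartite G) (hE : G.edgeSet.Nonempty) :
    vNumber (coverIdeal K G) = n - 2 := by
  classical
  obtain ⟨u, v, huv⟩ : ∃ u v : Fin n, G.Adj u v := by
    obtain ⟨e, he⟩ := hE
    induction e using Sym2.ind with
    | _ x y => exact ⟨x, y, he⟩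
  have hne : u ≠ v := huv.ne
  -- adjacency helper
  have hadj : ∀ a b w : Fin n, G.Adj a b → G.Adj a w ∨ G.Adj b w := by
    obtain ⟨k, P, -, huniq, hintra, hinter⟩ := hG
    intro a b w hab
    obtain ⟨ia, hia, -⟩ := huniq a
    obtain ⟨ib, hib, -⟩ := huniq b
    obtain ⟨iw, hiw, -⟩ := huniq w
    have hiab : ia ≠ ib := by
      rintro rfl
      exact hintra ia a hia b hib hab
    by_cases h : iw = ia
    · right
      refine hinter ib iw (fun hh => hiab ?_) b hib w hiw
      rw [h] at hh
      exact hh.symm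
    · left
      exact hinter ia iw (fun hh => h hh.symm) a hia w hiw
  have hmemJ : ∀ g : MvPolynomial (Fin n) K,
      g ∈ coverIdeal K G
        ↔ ∀ a b : Fin n, G.Adj a b → g ∈ Ideal.span {(X a : MvPolynomial (Fin n) K), X b} := by
    intro g
    simp [coverIdeal, Ideal.mem_iInf]
  have hmemColon : ∀ f r : MvPolynomial (Fin n) K,
      r ∈ (coverIdeal K G).colon (Ideal.span {f})
        ↔ ∀ a b : Fin n, G.Adj a b → r * f ∈ Ideal.span {(X a : MvPolynomial (Fin n) K), X b} := by
    intro f r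
    rw [Ideal.mem_colon_span_singleton, hmemJ]
  -- the witness polynomial
  set s : Finset (Fin n) := Finset.univ \ {u, v} with hs
  set f₀ : MvPolynomial (Fin n) K := ∏ w ∈ s, X w with hf₀
  have hcards : s.card = n - 2 := by
    rw [hs, Finset.card_sdiff_of_subset (Finset.subset_univ _), Finset.card_univ, Fintype.card_fin,
      Finset.card_insert_of_notMem (by simpa using hne), Finset.card_singleton]
  have hhom : f₀.IsHomogeneous (n - 2) := by
    have h := MvPolynomial.IsHomogeneous.prod s (fun w => (X w : MvPolynomial (Fin n) K))
      (fun _ => 1) (fun i _ => MvPolynomial.isHomogeneous_X K i)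
    rw [Finset.sum_const, smul_eq_mul, mul_one, hcards] at h
    exact h
  have hf₀ne : f₀ ≠ 0 := by
    rw [hf₀]
    exact Finset.prod_ne_zero_iff.mpr (fun w _ => MvPolynomial.X_ne_zero w)
  have hkillf₀ : kill K u v f₀ = f₀ := by
    rw [hf₀, map_prod]
    apply Finset.prod_congr rfl
    intro w hw
    have hw' : ¬(w = u ∨ w = v) := by
      simp only [hs, Finset.mem_sdiff, Finset.mem_univ, true_and, Finset.mem_insert,
        Finset.mem_singleton] at hw
      exact hw
    rw [kill_X, if_neg hw']
  have hf₀notmem : f₀ ∉ Ideal.span {(X u : MvPolynomial (Fin n) K), X v} := by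
    intro h
    exact hf₀ne (by rw [← hkillf₀]; exact mem_span_pair_iff.1 h)
  have hin : ∀ c : Fin n, (c = u ∨ c = v) → ∀ a b : Fin n, G.Adj a b →
      X c * f₀ ∈ Ideal.span {(X a : MvPolynomial (Fin n) K), X b} := by
    intro c hc a b hab
    by_cases ha : a = u ∨ a = v
    · by_cases hb : b = u ∨ b = v
      · have hab' : a ≠ b := hab.ne
        have hcab : c = a ∨ c = b := by
          rcases ha with rfl | rfl <;> rcases hb with hb | hb <;> rcases hc with rfl | rfl <;>
            simp_all
        have hXc : (X c : MvPolynomial (Fin n) K) ∈ Ideal.span {(X a : MvPolynomial (Fin n) K), X b} := by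
          rcases hcab with rfl | rfl
          · exact Ideal.subset_span (Set.mem_insert _ _)
          · exact Ideal.subset_span (Set.mem_insert_of_mem _ rfl)
        exact Ideal.mul_mem_right _ _ hXc
      · have hbs : b ∈ s := by
          simp only [hs, Finset.mem_sdiff, Finset.mem_univ, true_and, Finset.mem_insert,
            Finset.mem_singleton]
          exact hb
        have hXb : (X b : MvPolynomial (Fin n) K) ∈ Ideal.span {(X a : MvPolynomial (Fin n) K), X b} :=
          Ideal.subset_span (Set.mem_insert_of_mem _ rfl)
        have heq : X c * f₀ = X b * (X c * ∏ w ∈ s.erase b, X w) := by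
          rw [hf₀, ← Finset.mul_prod_erase s _ hbs]
          ring
        rw [heq]
        exact Ideal.mul_mem_right _ _ hXb
    · have has : a ∈ s := by
        simp only [hs, Finset.mem_sdiff, Finset.mem_univ, true_and, Finset.mem_insert,
          Finset.mem_singleton]
        exact ha
      have hXa : (X a : MvPolynomial (Fin n) K) ∈ Ideal.span {(X a : MvPolynomial (Fin n) K), X b} :=
        Ideal.subset_span (Set.mem_insert _ _)
      have heq : X c * f₀ = X a * (X c * ∏ w ∈ s.erase a, X w) := by
        rw [hf₀, ← Finset.mul_prod_erase s _ has]
        ring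
      rw [heq]
      exact Ideal.mul_mem_right _ _ hXa
  have hcolon : (coverIdeal K G).colon (Ideal.span {f₀})
      = Ideal.span {(X u : MvPolynomial (Fin n) K), X v} := by
    apply le_antisymm
    · intro r hr
      have h1 := (hmemColon f₀ r).1 hr u v huv
      rcases (span_pair_prime u v).mem_or_mem h1 with h | h
      · exact h
      · exact absurd h hf₀notmem
    · rw [Ideal.span_le]
      intro x hx
      simp only [Set.mem_insert_iff, Set.mem_singleton_iff] at hx
      rcases hx with rfl | rfl
      · exact (hmemColon f₀ (X u)).2 (hin u (Or.inl rfl))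
      · exact (hmemColon f₀ (X v)).2 (hin v (Or.inr rfl))
  have hmem : (n - 2) ∈ {d | ∃ f : MvPolynomial (Fin n) K, f.IsHomogeneous d ∧
      ((coverIdeal K G).colon (Ideal.span {f})).IsPrime} :=
    ⟨f₀, hhom, by rw [hcolon]; exact span_pair_prime u v⟩
  have hlb : ∀ d ∈ {d | ∃ f : MvPolynomial (Fin n) K, f.IsHomogeneous d ∧
      ((coverIdeal K G).colon (Ideal.span {f})).IsPrime}, n - 2 ≤ d := by
    rintro d ⟨f, hfhom, hfprime⟩
    have hfJ : f ∉ coverIdeal K G := by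
      intro hf
      apply hfprime.ne_top
      rw [Ideal.eq_top_iff_one, hmemColon]
      intro a b hab
      exact Ideal.mul_mem_left _ _ ((hmemJ f).1 hf a b hab)
    obtain ⟨a, b, hab, hfab⟩ : ∃ a b : Fin n, G.Adj a b ∧
        f ∉ Ideal.span {(X a : MvPolynomial (Fin n) K), X b} := by
      by_contra hcon
      push_neg at hcon
      exact hfJ ((hmemJ f).2 hcon)
    set T : Finset (Fin n × Fin n) :=
      Finset.univ.filter (fun e => G.Adj e.1 e.2 ∧
        f ∉ Ideal.span {(X e.1 : MvPolynomial (Fin n) K), X e.2}) with hT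
    have hQ : (coverIdeal K G).colon (Ideal.span {f})
        = T.inf (fun e => Ideal.span {(X e.1 : MvPolynomial (Fin n) K), X e.2}) := by
      ext r
      rw [hmemColon, Submodule.mem_finsetInf]
      constructor
      · intro h e heT
        rw [hT, Finset.mem_filter] at heT
        rcases (span_pair_prime e.1 e.2).mem_or_mem (h e.1 e.2 heT.2.1) with h' | h'
        · exact h'
        · exact absurd h' heT.2.2
      · intro h a' b' hab'
        by_cases hf' : f ∈ Ideal.span {(X a' : MvPolynomial (Fin n) K), X b'}
        · exact Ideal.mul_mem_left _ _ hf'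
        · exact Ideal.mul_mem_right _ _
            (h (a', b') (by rw [hT, Finset.mem_filter]; exact ⟨Finset.mem_univ _, hab', hf'⟩))
    obtain ⟨e0, he0T, he0le⟩ := (Ideal.IsPrime.inf_le' hfprime).1 (le_of_eq hQ.symm)
    have hQle : ∀ e ∈ T, (coverIdeal K G).colon (Ideal.span {f})
        ≤ Ideal.span {(X e.1 : MvPolynomial (Fin n) K), X e.2} := by
      intro e heT
      rw [hQ]
      exact Finset.inf_le heT
    have hsub1 : ∀ e ∈ T, e0.1 = e.1 ∨ e0.1 = e.2 := by
      intro e heT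
      exact X_mem_span_pair_iff.1
        ((hQle e heT) (he0le (Ideal.subset_span (Set.mem_insert _ _))))
    have hsub2 : ∀ e ∈ T, e0.2 = e.1 ∨ e0.2 = e.2 := by
      intro e heT
      exact X_mem_span_pair_iff.1
        ((hQle e heT) (he0le (Ideal.subset_span (Set.mem_insert_of_mem _ rfl))))
    have habT : (a, b) ∈ T := by
      rw [hT, Finset.mem_filter]
      exact ⟨Finset.mem_univ _, hab, hfab⟩
    have he0ne : e0.1 ≠ e0.2 := by
      rw [hT, Finset.mem_filter] at he0T
      exact he0T.2.1.ne
    obtain ⟨m, hm, hma, hmb⟩ := exists_coeff_of_not_mem_span_pair hfab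
    have hmw : ∀ w : Fin n, w ≠ a → w ≠ b → m w ≠ 0 := by
      intro w hwa hwb hmw0
      obtain ⟨c, hcab, hcw⟩ : ∃ c : Fin n, (c = a ∨ c = b) ∧ G.Adj c w := by
        rcases hadj a b w hab with h | h
        · exact ⟨a, Or.inl rfl, h⟩
        · exact ⟨b, Or.inr rfl, h⟩
      have hmc : m c = 0 := by
        rcases hcab with rfl | rfl
        · exact hma
        · exact hmb
      have hfcw : f ∉ Ideal.span {(X c : MvPolynomial (Fin n) K), X w} :=
        not_mem_span_pair hm hmc hmw0
      have hcwT : (c, w) ∈ T := by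
        rw [hT, Finset.mem_filter]
        exact ⟨Finset.mem_univ _, hcw, hfcw⟩
      have h1 := hsub1 _ habT
      have h2 := hsub2 _ habT
      have h3 := hsub1 _ hcwT
      have h4 := hsub2 _ hcwT
      have h5 : e0.1 = c := by
        rcases h3 with h3 | h3
        · exact h3
        · exfalso
          rcases h1 with h1 | h1
          · exact hwa (h3.symm.trans h1)
          · exact hwb (h3.symm.trans h1)
      have h6 : e0.2 = c := by
        rcases h4 with h4 | h4
        · exact h4
        · exfalso
          rcases h2 with h2 | h2
          · exact hwa (h4.symm.trans h2)
          · exact hwb (h4.symm.trans h2)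
      exact he0ne (h5.trans h6.symm)
    have hdeg : (∑ i ∈ m.support, m i) = d := by
      have h7 : m.degree = d := by
        rw [Finsupp.degree_eq_weight_one]
        exact hfhom hm
      simpa [Finsupp.degree_apply] using h7
    have hsubset : Finset.univ \ ({a, b} : Finset (Fin n)) ⊆ m.support := by
      intro w hw
      simp only [Finset.mem_sdiff, Finset.mem_univ, true_and, Finset.mem_insert,
        Finset.mem_singleton] at hw
      push_neg at hw
      exact Finsupp.mem_support_iff.2 (hmw w hw.1 hw.2)
    calc n - 2 = (Finset.univ \ ({a, b} : Finset (Fin n))).card := by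
          rw [Finset.card_sdiff_of_subset (Finset.subset_univ _), Finset.card_univ, Fintype.card_fin,
            Finset.card_insert_of_notMem (by simpa using hab.ne), Finset.card_singleton]
      _ ≤ m.support.card := Finset.card_le_card hsubset
      _ ≤ ∑ i ∈ m.support, m i := by
          rw [Finset.card_eq_sum_ones]
          exact Finset.sum_le_sum (fun i hi => Nat.one_le_iff_ne_zero.2 (Finsupp.mem_support_iff.1 hi))
      _ = d := hdeg
  unfold vNumber
  exact le_antisymm (Nat.sInf_le hmem) (le_csInf ⟨_, hmem⟩ hlb)


end
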